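/- Let P be a holomorphic function on the half-plane H_a = {Z ∈ ℂ : Re Z > a} satisfying |P(Z) − δZ| < ε̃ for all Z ∈ H_a, where δ ≥ 2 is an integer and ε̃ > 0. Then P is injective on {Z : Re Z > a + 2ε̃/δ}. -/

import Mathlib

open Set Metric intervalIntegral

/-- Cauchy-estimate step: on the smaller half-plane, `Re (deriv P Z) ≥ δ/2`. -/
lemma stmt15_deriv_re (δ : ℕ) (hδ : 2 ≤ δ) (a ε : ℝ) (hε : 0 < ε) (P : ℂ → ℂ)
    (hP : DifferentiableOn ℂ P {Z : ℂ | a < Z.re})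
    (hB : ∀ Z : ℂ, a < Z.re → ‖P Z - (δ : ℂ) * Z‖ < ε)
    {Z : ℂ} (hZ : a + 2 * ε / (δ : ℝ) < Z.re) :
    (δ : ℝ) / 2 ≤ (deriv P Z).re := by
  have hδR : (0 : ℝ) < (δ : ℝ) := by positivity
  set R : ℝ := 2 * ε / (δ : ℝ) with hR
  have hRpos : 0 < R := by positivity
  set g : ℂ → ℂ := fun z => P z - (δ : ℂ) * z with hg
  have hU : IsOpen {Z : ℂ | a < Z.re} := isOpen_lt continuous_const Complex.continuous_re
  have hsub : closedBall Z R ⊆ {Z : ℂ | a < Z.re} := by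
    intro w hw
    have h1 : |(w - Z).re| ≤ R := (Complex.abs_re_le_norm _).trans (mem_closedBall_iff_norm.mp hw)
    have : Z.re - R ≤ w.re := by
      have := neg_le_of_abs_le h1
      simp only [Complex.sub_re] at this; linarith
    simp only [Set.mem_setOf_eq]; linarith
  have hgd : DifferentiableOn ℂ g {Z : ℂ | a < Z.re} :=
    hP.sub ((differentiable_id.const_mul _).differentiableOn)
  have hdc : DiffContOnCl ℂ g (ball Z R) := by
    refine DifferentiableOn.diffContOnCl (hgd.mono ?_)
    exact (closure_ball_subset_closedBall).trans hsub
  have hest : ‖deriv g Z‖ ≤ ε / R := by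
    refine Complex.norm_deriv_le_of_forall_mem_sphere_norm_le hRpos hdc fun z hz => ?_
    have hzU : a < z.re := hsub (sphere_subset_closedBall hz)
    exact (hB z hzU).le
  have hεR : ε / R = (δ : ℝ) / 2 := by
    rw [hR]; field_simp
  -- deriv g Z = deriv P Z - δ
  have hPd : DifferentiableAt ℂ P Z := hP.differentiableAt (hU.mem_nhds (by
    simp only [Set.mem_setOf_eq]; linarith))
  have hderiv : deriv g Z = deriv P Z - (δ : ℂ) := by
    have h1 : HasDerivAt P (deriv P Z) Z := hPd.hasDerivAt
    have h2 : HasDerivAt (fun z : ℂ => (δ : ℂ) * z) (δ : ℂ) Z := by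
      simpa using (hasDerivAt_id Z).const_mul (δ : ℂ)
    exact (h1.sub h2).deriv
  have h3 : |(deriv g Z).re| ≤ (δ : ℝ) / 2 := by
    calc |(deriv g Z).re| ≤ ‖deriv g Z‖ := Complex.abs_re_le_norm _
      _ ≤ ε / R := hest
      _ = (δ : ℝ) / 2 := hεR
  have h4 : (deriv g Z).re = (deriv P Z).re - (δ : ℝ) := by
    rw [hderiv]; simp
  have := neg_le_of_abs_le h3
  rw [h4] at this
  linarith

set_option maxHeartbeats 1000000 in
/-- If `P` is holomorphic on the half-plane `{Re Z > a}` and `|P(Z) − δZ| < ε` there,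
with `δ ≥ 2` an integer and `ε > 0`, then `P` is injective on `{Re Z > a + 2ε/δ}`. -/
theorem stmt15 (δ : ℕ) (hδ : 2 ≤ δ) (a ε : ℝ) (hε : 0 < ε) (P : ℂ → ℂ)
    (hP : DifferentiableOn ℂ P {Z : ℂ | a < Z.re})
    (hB : ∀ Z : ℂ, a < Z.re → ‖P Z - (δ : ℂ) * Z‖ < ε) :
    Set.InjOn P {Z : ℂ | a + 2 * ε / (δ : ℝ) < Z.re} := by
  have hδR : (0 : ℝ) < (δ : ℝ) := by positivity
  have hRpos : 0 < 2 * ε / (δ : ℝ) := by positivity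
  have hU : IsOpen {Z : ℂ | a < Z.re} := isOpen_lt continuous_const Complex.continuous_re
  intro Z₁ h₁ Z₂ h₂ heq
  by_contra hne
  simp only [Set.mem_setOf_eq] at h₁ h₂
  set γ : ℝ → ℂ := fun t => Z₁ + t • (Z₂ - Z₁) with hγ
  have hγmem : ∀ t ∈ Set.Icc (0:ℝ) 1, a + 2 * ε / (δ : ℝ) < (γ t).re := by
    intro t ht
    have : (γ t).re = (1 - t) * Z₁.re + t * Z₂.re := by
      simp only [hγ, Complex.add_re, Complex.real_smul, Complex.mul_re, Complex.sub_re,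
        Complex.ofReal_re, Complex.ofReal_im, Complex.sub_im]
      ring
    rw [this]
    set c := a + 2 * ε / (δ : ℝ) with hc
    rcases eq_or_lt_of_le ht.1 with h0 | h0
    · simp [← h0]; linarith
    · have h1' : (1 - t) * c ≤ (1 - t) * Z₁.re :=
        mul_le_mul_of_nonneg_left h₁.le (by linarith [ht.2])
      have h2' : t * c < t * Z₂.re := by
        exact mul_lt_mul_of_pos_left h₂ h0
      nlinarith
  have hγU : ∀ t ∈ Set.Icc (0:ℝ) 1, a < (γ t).re := fun t ht => by
    have := hγmem t ht; linarith
  have hγcont : Continuous γ := by fun_prop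
  -- derivative of P ∘ γ
  have hD : ∀ t ∈ Set.Icc (0:ℝ) 1,
      HasDerivAt (fun s => P (γ s)) ((Z₂ - Z₁) * deriv P (γ t)) t := by
    intro t ht
    have hPd : DifferentiableAt ℂ P (γ t) :=
      hP.differentiableAt (hU.mem_nhds (hγU t ht))
    have hγd : HasDerivAt γ (Z₂ - Z₁) t := by
      simpa [hγ] using ((hasDerivAt_id t).smul_const (Z₂ - Z₁)).const_add Z₁
    have := HasDerivAt.scomp t hPd.hasDerivAt hγd
    simp only [smul_eq_mul, mul_comm] at this
    exact this
  -- continuity of the integrand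
  have hdc : ContinuousOn (deriv P) {Z : ℂ | a < Z.re} :=
    ((hP.analyticOnNhd hU).deriv).continuousOn
  have hcont : ContinuousOn (fun t => deriv P (γ t)) (Set.Icc (0:ℝ) 1) :=
    hdc.comp hγcont.continuousOn fun t ht => hγU t ht
  have hint : IntervalIntegrable (fun t => deriv P (γ t)) MeasureTheory.volume 0 1 :=
    hcont.intervalIntegrable_of_Icc zero_le_one
  have hint' : IntervalIntegrable (fun t => (Z₂ - Z₁) * deriv P (γ t))
      MeasureTheory.volume 0 1 := hint.const_mul _
  have hFTC : ∫ t in (0:ℝ)..1, (Z₂ - Z₁) * deriv P (γ t) = P (γ 1) - P (γ 0) := by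
    refine intervalIntegral.integral_eq_sub_of_hasDerivAt (f := fun s => P (γ s)) (fun t ht => ?_) hint'
    exact hD t (by rwa [Set.uIcc_of_le zero_le_one] at ht)
  have hγ0 : γ 0 = Z₁ := by simp [hγ]
  have hγ1 : γ 1 = Z₂ := by simp [hγ]
  rw [hγ0, hγ1, heq, sub_self] at hFTC
  rw [intervalIntegral.integral_const_mul] at hFTC
  have hZne : Z₂ - Z₁ ≠ 0 := sub_ne_zero.mpr (Ne.symm hne)
  have hI0 : ∫ t in (0:ℝ)..1, deriv P (γ t) = 0 := by
    rcases mul_eq_zero.mp hFTC with h | h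
    · exact absurd h hZne
    · exact h
  -- real part of the integral is positive: contradiction
  have hre : ∫ t in (0:ℝ)..1, (deriv P (γ t)).re = 0 := by
    have := Complex.reCLM.intervalIntegral_comp_comm hint (a := 0) (b := 1)
    simp only [Complex.reCLM_apply] at this
    rw [this, hI0]; simp
  have hintre : IntervalIntegrable (fun t => (deriv P (γ t)).re)
      MeasureTheory.volume 0 1 :=
    (Complex.continuous_re.comp_continuousOn hcont).intervalIntegrable_of_Icc zero_le_one
  have hmono : (δ : ℝ) / 2 ≤ ∫ t in (0:ℝ)..1, (deriv P (γ t)).re := by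
    have := intervalIntegral.integral_mono_on (a := (0:ℝ)) (b := 1) zero_le_one
      (_root_.intervalIntegrable_const (c := (δ : ℝ)/2)) hintre
      (fun t ht => stmt15_deriv_re δ hδ a ε hε P hP hB (hγmem t ht))
    simpa using this
  rw [hre] at hmono
  linarith
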